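/- Reduction theorem for guessing games with posterior information: Let 𝓔 be a state ensemble on a finite-dimensional complex Hilbert space ℋ with finite label set X, let Y, T be finite sets, f : X × Y → [0,1] a score function, α a partial information map, and suppose Δ(𝓔,f) = Σ_{x,y} f(x,y)·tr[𝓔(x)] is nonzero. Define the auxiliary state ensemble 𝓔_{f,α} with label set Y^T by 𝓔_{f,α}(φ) = (|Y|^{|T|−1}·Δ(𝓔,f))^{-1} Σ_{x,t} f(x,φ(t))·α(t | x)·𝓔(x). Then 𝓔_{f,α} is a state ensemble and E^post_{f,α}(𝓔) = |Y|^{|T|−1}·Δ(𝓔,f)·Pg(𝓔_{f,α}). -/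

import Mathlib

open scoped BigOperators
open Matrix
open scoped ComplexOrder
open scoped Pointwise

noncomputable section

abbrev Mat (d : ℕ) := Matrix (Fin d) (Fin d) ℂ

def IsStateEnsemble {d : ℕ} {X : Type*} [Fintype X] (E : X → Mat d) : Prop :=
  (∀ x, (E x).PosSemidef) ∧ (∑ x, (E x).trace) = 1

def IsMeasurement {d : ℕ} {Z : Type*} [Fintype Z] (M : Z → Mat d) : Prop :=
  (∀ z, (M z).PosSemidef) ∧ (∑ z, M z) = 1

def IsScore {X Y : Type*} (f : X → Y → ℝ) : Prop :=
  ∀ x y, 0 ≤ f x y ∧ f x y ≤ 1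

def IsPartialInfo {T X : Type*} [Fintype T] (α : T → X → ℝ) : Prop :=
  (∀ t x, 0 ≤ α t x) ∧ ∀ x, (∑ t, α t x) = 1

def IsPostProc {T Y Z : Type*} [Fintype Y] (ν : T → Y → Z → ℝ) : Prop :=
  (∀ t y z, 0 ≤ ν t y z) ∧ ∀ t z, (∑ y, ν t y z) = 1

def Pg {d : ℕ} {X : Type*} [Fintype X] (E M : X → Mat d) : ℝ :=
  ∑ x, ((E x) * (M x)).trace.re

def PgMax {d : ℕ} {X : Type*} [Fintype X] (E : X → Mat d) : ℝ :=
  sSup {p : ℝ | ∃ M : X → Mat d, IsMeasurement M ∧ p = Pg E M}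

def Escore {d : ℕ} {X Y : Type*} [Fintype X] [Fintype Y]
    (f : X → Y → ℝ) (E : X → Mat d) (M : Y → Mat d) : ℝ :=
  ∑ x, ∑ y, f x y * ((E x) * (M y)).trace.re

def EMax {d : ℕ} {X Y : Type*} [Fintype X] [Fintype Y]
    (f : X → Y → ℝ) (E : X → Mat d) : ℝ :=
  sSup {p : ℝ | ∃ M : Y → Mat d, IsMeasurement M ∧ p = Escore f E M}

def Epost {d : ℕ} {X Y T Z : Type*} [Fintype X] [Fintype Y] [Fintype T] [Fintype Z]
    (f : X → Y → ℝ) (α : T → X → ℝ) (E : X → Mat d)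
    (M : Z → Mat d) (ν : T → Y → Z → ℝ) : ℝ :=
  ∑ x, ∑ y, ∑ t, ∑ z, f x y * α t x * ν t y z * ((E x) * (M z)).trace.re

def EpostMax {d : ℕ} {X Y T : Type*} [Fintype X] [Fintype Y] [Fintype T]
    (f : X → Y → ℝ) (α : T → X → ℝ) (E : X → Mat d) : ℝ :=
  sSup {p : ℝ | ∃ (n : ℕ) (M : Fin n → Mat d) (ν : T → Y → Fin n → ℝ),
    IsMeasurement M ∧ IsPostProc ν ∧ p = Epost f α E M ν}

def Eprior {d : ℕ} {X Y T : Type*} [Fintype X] [Fintype Y] [Fintype T]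
    (f : X → Y → ℝ) (α : T → X → ℝ) (E : X → Mat d) (N : T → Y → Mat d) : ℝ :=
  ∑ x, ∑ y, ∑ t, f x y * α t x * ((E x) * (N t y)).trace.re

def EpriorMax {d : ℕ} {X Y T : Type*} [Fintype X] [Fintype Y] [Fintype T]
    (f : X → Y → ℝ) (α : T → X → ℝ) (E : X → Mat d) : ℝ :=
  sSup {p : ℝ | ∃ N : T → Y → Mat d, (∀ t, IsMeasurement (N t)) ∧ p = Eprior f α E N}

def IsCompatible {d : ℕ} {T Y : Type*} [Fintype T] [Fintype Y] (N : T → Y → Mat d) : Prop :=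
  ∃ (n : ℕ) (M : Fin n → Mat d) (ν : T → Y → Fin n → ℝ),
    IsMeasurement M ∧ IsPostProc ν ∧ ∀ t y, N t y = ∑ z, ν t y z • M z

def stdPost {T Y : Type*} [DecidableEq Y] : T → Y → (T → Y) → ℝ :=
  fun t y φ => if y = φ t then 1 else 0

def Δconst {d : ℕ} {X Y : Type*} [Fintype X] [Fintype Y]
    (f : X → Y → ℝ) (E : X → Mat d) : ℝ :=
  ∑ x, ∑ y, f x y * (E x).trace.re

def auxEns {d : ℕ} {X Y : Type*} [Fintype X] [Fintype Y]
    (f : X → Y → ℝ) (E : X → Mat d) (y : Y) : Mat d :=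
  (Δconst f E)⁻¹ • ∑ x, f x y • E x

def auxEnsPost {d : ℕ} {X Y T : Type*} [Fintype X] [Fintype Y] [Fintype T]
    (f : X → Y → ℝ) (α : T → X → ℝ) (E : X → Mat d) (φ : T → Y) : Mat d :=
  ((Fintype.card Y : ℝ) ^ (Fintype.card T - 1) * Δconst f E)⁻¹ •
    ∑ x, ∑ t, (f x (φ t) * α t x) • E x


section helper
variable {d : ℕ}

lemma psd_real_smul {A : Mat d} (hA : A.PosSemidef) {r : ℝ} (hr : 0 ≤ r) :
    (r • A).PosSemidef := by
  have h : r • A = (r : ℂ) • A := by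
    ext i j; simp [Matrix.smul_apply, Complex.real_smul]
  rw [h]
  refine Matrix.PosSemidef.of_dotProduct_mulVec_nonneg ?_ ?_
  · unfold Matrix.IsHermitian
    rw [conjTranspose_smul, hA.1]
    congr 1
    simp
  · intro x
    rw [smul_mulVec, dotProduct_smul]
    exact mul_nonneg (by exact_mod_cast hr) (hA.dotProduct_mulVec_nonneg x)

lemma psd_sum {ι : Type*} (s : Finset ι) (A : ι → Mat d)
    (h : ∀ i ∈ s, (A i).PosSemidef) : (∑ i ∈ s, A i).PosSemidef := by
  classical
  induction s using Finset.induction_on with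
  | empty => simpa using Matrix.PosSemidef.zero
  | insert _ _ hx ih =>
    rw [Finset.sum_insert hx]
    exact (h _ (Finset.mem_insert_self _ _)).add (ih fun i hi => h i (Finset.mem_insert_of_mem hi))

lemma psd_trace_re {A : Mat d} (hA : A.PosSemidef) :
    A.trace = ((A.trace.re : ℝ) : ℂ) ∧ 0 ≤ A.trace.re := by
  have hdiag : ∀ i, 0 ≤ A i i := by
    intro i
    have := hA.dotProduct_mulVec_nonneg (Pi.single i 1)
    simpa [dotProduct, Matrix.mulVec, Pi.single_apply, Finset.sum_ite_eq] using this
  have htr : 0 ≤ A.trace := Finset.sum_nonneg fun i _ => hdiag i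
  rw [Complex.le_def] at htr
  refine ⟨Complex.ext (by simp) ?_, by simpa using htr.1⟩
  simp [← htr.2]

lemma sum_fun_eval {T Y : Type} [Fintype T] [DecidableEq T] [Fintype Y]
    {M : Type*} [AddCommMonoid M] (t : T) (g : Y → M) :
    ∑ φ : T → Y, g (φ t) = (Fintype.card Y ^ (Fintype.card T - 1)) • ∑ y, g y := by
  classical
  calc ∑ φ : T → Y, g (φ t)
      = ∑ p : Y × ({j : T // j ≠ t} → Y), g p.1 :=
        Fintype.sum_equiv (Equiv.piSplitAt t (fun _ => Y)) _ _ (fun φ => rfl)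
    _ = ∑ y : Y, ∑ _w : ({j : T // j ≠ t} → Y), g y := by rw [Fintype.sum_prod_type]
    _ = ∑ y : Y, (Fintype.card ({j : T // j ≠ t} → Y)) • g y := by
        simp [Finset.sum_const, Finset.card_univ]
    _ = (Fintype.card Y ^ (Fintype.card T - 1)) • ∑ y, g y := by
        rw [Finset.smul_sum]
        congr 1
        ext y
        congr 2
        rw [Fintype.card_fun]
        congr 1
        rw [Fintype.card_subtype_compl, Fintype.card_subtype_eq]

lemma sum_prod_eval {T Y : Type} [Fintype T] [DecidableEq T] [Fintype Y]
    (h : T → Y → ℝ) :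
    ∑ φ : T → Y, ∏ t, h t (φ t) = ∏ t, ∑ y, h t y := by
  rw [← Fintype.piFinset_univ, ← Finset.prod_univ_sum]

lemma key1 {T Y : Type} [Fintype T] [DecidableEq T] [Fintype Y]
    (t : T) (g : Y → ℝ) (ν : T → Y → ℝ) (hν : ∀ t', t' ≠ t → ∑ y, ν t' y = 1) :
    ∑ φ : T → Y, g (φ t) * ∏ t', ν t' (φ t') = ∑ y, g y * ν t y := by
  classical
  have step1 : ∀ φ : T → Y, g (φ t) * ∏ t', ν t' (φ t')
      = ∏ t', (if t' = t then g (φ t') else 1) * ν t' (φ t') := by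
    intro φ
    rw [Finset.prod_mul_distrib, Finset.prod_ite_eq' Finset.univ t (fun t' => g (φ t'))]
    simp
  simp only [step1]
  rw [sum_prod_eval (fun t' y => (if t' = t then g y else 1) * ν t' y)]
  have step2 : ∀ t', (∑ y, (if t' = t then g y else 1) * ν t' y)
      = if t' = t then (∑ y, g y * ν t y) else 1 := by
    intro t'
    by_cases h : t' = t
    · subst h; simp
    · simp only [h, if_false, one_mul]
      exact hν t' h
  simp only [step2]
  rw [Finset.prod_ite_eq' Finset.univ t (fun _ => ∑ y, g y * ν t y)]
  simp

lemma cPg_eq {X Y T : Type} [Fintype X] [Fintype Y] [Fintype T] [DecidableEq T]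
    (E : X → Mat d) (f : X → Y → ℝ) (α : T → X → ℝ) (c : ℝ)
    (hcdef : c = (Fintype.card Y : ℝ) ^ (Fintype.card T - 1) * Δconst f E)
    (hc : c ≠ 0) (W : (T → Y) → Mat d) :
    c * Pg (auxEnsPost f α E) W
      = ∑ φ : T → Y, ∑ x, ∑ t, f x (φ t) * α t x * ((E x) * (W φ)).trace.re := by
  subst hcdef
  unfold Pg auxEnsPost
  rw [Finset.mul_sum]
  refine Finset.sum_congr rfl fun φ _ => ?_
  rw [Matrix.smul_mul, Matrix.trace_smul, Complex.smul_re, smul_eq_mul,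
      mul_inv_cancel_left₀ hc]
  simp only [Finset.sum_mul, Matrix.smul_mul, Matrix.trace_sum, Matrix.trace_smul,
    Complex.re_sum, Complex.smul_re, smul_eq_mul, mul_assoc]

lemma forward_meas {n : ℕ} {Y T : Type} [Fintype Y] [Fintype T] [DecidableEq T]
    (M : Fin n → Mat d) (ν : T → Y → Fin n → ℝ)
    (hM : IsMeasurement M) (hν : IsPostProc ν) :
    IsMeasurement (fun φ : T → Y => ∑ z, (∏ t, ν t (φ t) z) • M z) := by
  constructor
  · intro φ
    apply psd_sum
    intro z _
    exact psd_real_smul (hM.1 z) (Finset.prod_nonneg fun t _ => hν.1 t (φ t) z)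
  · rw [Finset.sum_comm]
    have h : ∀ z, ∑ φ : T → Y, (∏ t, ν t (φ t) z) • M z = M z := by
      intro z
      rw [← Finset.sum_smul, sum_prod_eval (fun t y => ν t y z)]
      simp only [hν.2]
      rw [Finset.prod_const_one, one_smul]
    simp only [h]
    exact hM.2

lemma forward_eq {n : ℕ} {X Y T : Type} [Fintype X] [Fintype Y] [Fintype T] [DecidableEq T]
    (E : X → Mat d) (f : X → Y → ℝ) (α : T → X → ℝ)
    (M : Fin n → Mat d) (ν : T → Y → Fin n → ℝ) (hν : IsPostProc ν) :
    Epost f α E M ν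
      = ∑ φ : T → Y, ∑ x, ∑ t, f x (φ t) * α t x
          * ((E x) * ((fun φ : T → Y => ∑ z, (∏ t, ν t (φ t) z) • M z) φ)).trace.re := by
  have hW : ∀ (x : X) (φ : T → Y), ((E x) * (∑ z, (∏ t, ν t (φ t) z) • M z)).trace.re
      = ∑ z, (∏ t', ν t' (φ t') z) * ((E x) * M z).trace.re := by
    intro x φ
    rw [Finset.mul_sum]
    simp only [Matrix.mul_smul, Matrix.trace_sum, Matrix.trace_smul, Complex.re_sum,
      Complex.smul_re, smul_eq_mul]
  simp only [hW]
  simp only [Finset.mul_sum]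
  unfold Epost
  conv_rhs => rw [Finset.sum_comm]
  refine Finset.sum_congr rfl fun x _ => ?_
  conv_lhs => rw [Finset.sum_comm]
  conv_rhs => rw [Finset.sum_comm]
  refine Finset.sum_congr rfl fun t _ => ?_
  conv_lhs => rw [Finset.sum_comm]
  conv_rhs => rw [Finset.sum_comm]
  refine Finset.sum_congr rfl fun z _ => ?_
  have k := key1 t (fun y => f x y) (fun t' y => ν t' y z) (fun t' _ => hν.2 t' z)
  calc ∑ y, f x y * α t x * ν t y z * ((E x) * M z).trace.re
      = (∑ y, f x y * ν t y z) * (α t x * ((E x) * M z).trace.re) := by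
        rw [Finset.sum_mul]; exact Finset.sum_congr rfl fun y _ => by ring
    _ = (∑ φ : T → Y, f x (φ t) * ∏ t', ν t' (φ t') z)
          * (α t x * ((E x) * M z).trace.re) := by rw [k]
    _ = ∑ φ : T → Y, f x (φ t) * α t x * ((∏ t', ν t' (φ t') z) * ((E x) * M z).trace.re) := by
        rw [Finset.sum_mul]; exact Finset.sum_congr rfl fun φ _ => by ring

lemma backward_eq {X Y T : Type} [Fintype X] [Fintype Y] [Fintype T] [DecidableEq T]
    [DecidableEq Y]
    (E : X → Mat d) (f : X → Y → ℝ) (α : T → X → ℝ) (N : (T → Y) → Mat d) :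
    Epost f α E (fun z => N ((Fintype.equivFin (T → Y)).symm z))
        (fun t y z => if y = (Fintype.equivFin (T → Y)).symm z t then 1 else 0)
      = ∑ φ : T → Y, ∑ x, ∑ t, f x (φ t) * α t x * ((E x) * (N φ)).trace.re := by
  set e := (Fintype.equivFin (T → Y)).symm with hedef
  unfold Epost
  conv_rhs => rw [Finset.sum_comm]
  refine Finset.sum_congr rfl fun x _ => ?_
  conv_lhs => rw [Finset.sum_comm]
  conv_rhs => rw [Finset.sum_comm]
  refine Finset.sum_congr rfl fun t _ => ?_
  conv_lhs => rw [Finset.sum_comm]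
  have h1 : ∀ z, ∑ y, f x y * α t x * (if y = e z t then 1 else 0)
        * ((E x) * (N (e z))).trace.re
      = f x (e z t) * α t x * ((E x) * (N (e z))).trace.re := by
    intro z
    rw [Finset.sum_congr rfl (fun y _ => by
      rw [show f x y * α t x * (if y = e z t then 1 else 0) * ((E x) * (N (e z))).trace.re
        = (if y = e z t then f x y * α t x * ((E x) * (N (e z))).trace.re else 0) from by
          by_cases h : y = e z t <;> simp [h]])]
    rw [Finset.sum_ite_eq' Finset.univ (e z t)
      (fun y => f x y * α t x * ((E x) * (N (e z))).trace.re)]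
    simp
  calc ∑ z, ∑ y, f x y * α t x * (if y = e z t then 1 else 0) * ((E x) * (N (e z))).trace.re
      = ∑ z, f x (e z t) * α t x * ((E x) * (N (e z))).trace.re :=
        Finset.sum_congr rfl fun z _ => h1 z
    _ = ∑ φ : T → Y, f x (φ t) * α t x * ((E x) * (N φ)).trace.re :=
        Equiv.sum_comp e (fun φ => f x (φ t) * α t x * ((E x) * (N φ)).trace.re)

end helper

theorem stmt9 {d : ℕ} {X Y T : Type} [Fintype X] [Fintype Y] [Fintype T] [DecidableEq T]
    (E : X → Mat d) (hE : IsStateEnsemble E)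
    (f : X → Y → ℝ) (hf : IsScore f)
    (α : T → X → ℝ) (hα : IsPartialInfo α)
    (hΔ : Δconst f E ≠ 0) :
    IsStateEnsemble (auxEnsPost f α E) ∧
    EpostMax f α E
      = (Fintype.card Y : ℝ) ^ (Fintype.card T - 1) * Δconst f E
          * PgMax (auxEnsPost f α E) := by
  classical
  obtain ⟨hEpsd, hEtr⟩ := hE
  have hY : Nonempty Y := by
    rcases isEmpty_or_nonempty Y with h | h
    · exfalso; apply hΔ; unfold Δconst; simp
    · exact h
  have hX : Nonempty X := by
    rcases isEmpty_or_nonempty X with h | h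
    · exfalso; apply hΔ; unfold Δconst; simp
    · exact h
  have hΔnn : 0 ≤ Δconst f E := Finset.sum_nonneg fun x _ => Finset.sum_nonneg fun y _ =>
    mul_nonneg (hf x y).1 (psd_trace_re (hEpsd x)).2
  have hΔpos : 0 < Δconst f E := lt_of_le_of_ne hΔnn (Ne.symm hΔ)
  have hcardY : 0 < (Fintype.card Y : ℝ) := by
    have := Fintype.card_pos (α := Y)
    exact_mod_cast this
  set c := (Fintype.card Y : ℝ) ^ (Fintype.card T - 1) * Δconst f E with hcdef
  have hcpos : 0 < c := mul_pos (pow_pos hcardY _) hΔpos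
  have hc : c ≠ 0 := ne_of_gt hcpos
  constructor
  · constructor
    · intro φ
      unfold auxEnsPost
      rw [← hcdef]
      refine psd_real_smul ?_ (inv_nonneg.mpr hcpos.le)
      refine psd_sum _ _ fun x _ => ?_
      refine psd_sum _ _ fun t _ => ?_
      exact psd_real_smul (hEpsd x) (mul_nonneg (hf x (φ t)).1 (hα.1 t x))
    · have h1 : ∀ φ : T → Y, (auxEnsPost f α E φ).trace
          = c⁻¹ • ∑ x, ∑ t, (f x (φ t) * α t x) • (E x).trace := by
        intro φ
        unfold auxEnsPost
        rw [← hcdef, Matrix.trace_smul]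
        congr 1
        simp [Matrix.trace_sum, Matrix.trace_smul]
      have h2 : ∑ φ : T → Y, ∑ x, ∑ t, (f x (φ t) * α t x) • (E x).trace
          = (Fintype.card Y ^ (Fintype.card T - 1) : ℕ)
              • ∑ x, ∑ t, ∑ y, (f x y * α t x) • (E x).trace := by
        rw [Finset.sum_comm, Finset.smul_sum]
        refine Finset.sum_congr rfl fun x _ => ?_
        rw [Finset.sum_comm, Finset.smul_sum]
        refine Finset.sum_congr rfl fun t _ => ?_
        exact sum_fun_eval t (fun y => (f x y * α t x) • (E x).trace)
      have h3 : ∑ x, ∑ t, ∑ y, (f x y * α t x) • (E x).trace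
          = ((Δconst f E : ℝ) : ℂ) := by
        unfold Δconst
        push_cast
        refine Finset.sum_congr rfl fun x _ => ?_
        rw [Finset.sum_comm]
        refine Finset.sum_congr rfl fun y _ => ?_
        rw [← Finset.sum_smul, ← Finset.mul_sum, hα.2 x, mul_one,
          (psd_trace_re (hEpsd x)).1, Complex.real_smul]
        push_cast
        simp
      simp only [h1]
      rw [← Finset.smul_sum, h2, h3, nsmul_eq_mul, Complex.real_smul]
      have h4 : ((Fintype.card Y ^ (Fintype.card T - 1) : ℕ) : ℂ)
          * ((Δconst f E : ℝ) : ℂ) = ((c : ℝ) : ℂ) := by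
        rw [hcdef]
        push_cast
        ring
      rw [h4, ← Complex.ofReal_mul, inv_mul_cancel₀ hc, Complex.ofReal_one]
  · have hseteq : {p : ℝ | ∃ (n : ℕ) (M : Fin n → Mat d) (ν : T → Y → Fin n → ℝ),
        IsMeasurement M ∧ IsPostProc ν ∧ p = Epost f α E M ν}
        = c • {p : ℝ | ∃ W : (T → Y) → Mat d,
            IsMeasurement W ∧ p = Pg (auxEnsPost f α E) W} := by
      apply Set.Subset.antisymm
      · rintro p ⟨n, M, ν, hM, hν, rfl⟩
        refine Set.mem_smul_set.mpr
          ⟨Pg (auxEnsPost f α E) (fun φ : T → Y => ∑ z, (∏ t, ν t (φ t) z) • M z),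
            ⟨_, forward_meas M ν hM hν, rfl⟩, ?_⟩
        rw [smul_eq_mul, cPg_eq E f α c hcdef hc]
        exact (forward_eq E f α M ν hν).symm
      · rintro _ ⟨q, ⟨N, hN, rfl⟩, rfl⟩
        refine ⟨Fintype.card (T → Y),
          fun z => N ((Fintype.equivFin (T → Y)).symm z),
          fun t y z => if y = (Fintype.equivFin (T → Y)).symm z t then 1 else 0,
          ⟨fun z => hN.1 _, ?_⟩, ⟨fun t y z => ?_, fun t z => ?_⟩, ?_⟩
        · rw [Equiv.sum_comp ((Fintype.equivFin (T → Y)).symm) N]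
          exact hN.2
        · dsimp only
          split <;> norm_num
        · dsimp only
          rw [Finset.sum_ite_eq' Finset.univ ((Fintype.equivFin (T → Y)).symm z t)
            (fun _ => (1 : ℝ))]
          simp
        · show c • Pg (auxEnsPost f α E) N = _
          rw [smul_eq_mul, cPg_eq E f α c hcdef hc]
          exact (backward_eq E f α N).symm
    show EpostMax f α E = c * PgMax (auxEnsPost f α E)
    unfold EpostMax PgMax
    rw [hseteq, Real.sSup_smul_of_nonneg hcpos.le, smul_eq_mul]
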